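/- Let (D, ≤, u) be a dimension group of rank at least 2 and Φ an order-preserving automorphism with Φ(u) = q·u for a positive rational q. If there exists a nonzero d ∈ D with Φ(d) = −d, then q = 1. -/

import Mathlib

/-- `q • u ≥ d` for a rational `q`, interpreted by clearing denominators: for every
representation `q = a / b` with `b > 0` we have `b • d ≤ a • u`. -/
def ratGe {D : Type*} [AddCommGroup D] [PartialOrder D] (u d : D) (q : ℚ) : Prop :=
  ∀ a b : ℤ, 0 < b → q = (a : ℚ) / (b : ℚ) → b • d ≤ a • u

/-- `q • u ≤ d` for a rational `q`, interpreted by clearing denominators. -/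
def ratLe {D : Type*} [AddCommGroup D] [PartialOrder D] (u d : D) (q : ℚ) : Prop :=
  ∀ a b : ℤ, 0 < b → q = (a : ℚ) / (b : ℚ) → a • u ≤ b • d

/-- A dimension group: a countable partially ordered abelian group (translation
invariant order) with order unit `u`, in which every finite subset is contained in a
subgroup order-isomorphic to a finite direct power of `(ℤ, ≤)`. -/
structure IsDimensionGroup (D : Type*) [AddCommGroup D] [PartialOrder D] (u : D) : Prop where
  add_le_add : ∀ a b c : D, a ≤ b → a + c ≤ b + c
  countable : Countable D
  unit_nonneg : 0 ≤ u
  unit_arch : ∀ x : D, ∃ n : ℕ, 0 < n ∧ x ≤ (n : ℤ) • u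
  locallyZ : ∀ s : Finset D, ∃ (k : ℕ) (S : AddSubgroup D) (e : S ≃+ (Fin k → ℤ)),
    (∀ x ∈ s, x ∈ S) ∧ ∀ a b : S, a ≤ b ↔ e a ≤ e b
/-- In a dimension group of rank at least 2, an order-preserving
automorphism `Φ` with `Φ u = q • u` (`q` a positive rational) negating some nonzero
element must have `q = 1`. -/
theorem stmt16 {D : Type*} [AddCommGroup D] [PartialOrder D] (u : D)
    (h : IsDimensionGroup D u)
    (hrank : ∃ f : Fin 2 → D, LinearIndependent ℤ f)
    (Φ : D ≃+ D) (hord : ∀ x y : D, x ≤ y ↔ Φ x ≤ Φ y)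
    (q : ℚ) (hq : 0 < q) (hΦu : (q.den : ℤ) • Φ u = q.num • u)
    (d : D) (hd : d ≠ 0) (hneg : Φ d = -d) : q = 1 := by
  by_contra hq1
  classical
  -- make D an ordered additive group (the order data is definitionally unchanged)
  haveI : IsOrderedAddMonoid D :=
    { add_le_add_left := fun a b hab c => by
        simpa using h.add_le_add a b c hab }
  obtain ⟨k, S, e, hmem, hiso⟩ := h.locallyZ {u, d}
  have huS : u ∈ S := hmem u (by simp)
  have hdS : d ∈ S := hmem d (by simp)
  -- k is positive, else d = 0
  rcases Nat.eq_zero_or_pos k with hk | hk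
  · subst hk
    haveI : Subsingleton (Fin 0 → ℤ) := inferInstance
    have : (⟨d, hdS⟩ : S) = 0 := e.injective (Subsingleton.elim _ _)
    exact hd (by simpa using congrArg Subtype.val this)
  haveI : Nonempty (Fin k) := ⟨⟨0, hk⟩⟩
  set v : Fin k → ℤ := e ⟨u, huS⟩ with hv
  set w : Fin k → ℤ := e ⟨d, hdS⟩ with hweq
  -- order on S in coordinates
  have hSle : ∀ x y : S, ((x : D) ≤ (y : D)) ↔ ∀ i, e x i ≤ e y i := by
    intro x y
    rw [show ((x : D) ≤ (y : D)) ↔ x ≤ y from Subtype.coe_le_coe, hiso x y]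
    exact Pi.le_def
  -- coordinates of integer multiples
  have hsm : ∀ (c : ℤ) (x : S) (i : Fin k), e (c • x) i = c * e x i := by
    intro c x i
    rw [map_zsmul]
    simp [zsmul_eq_mul]
  have hcoord : ∀ a b : ℤ, b • d ≤ a • u ↔ ∀ i, b * w i ≤ a * v i := by
    intro a b
    have h1 : ((b • (⟨d, hdS⟩ : S) : S) : D) = b • d := by simp
    have h2 : ((a • (⟨u, huS⟩ : S) : S) : D) = a • u := by simp
    rw [← h1, ← h2, hSle]
    constructor <;> intro hi i <;> have := hi i <;> rw [hsm, hsm] at * <;> exact this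
  have hcoord' : ∀ a b : ℤ, a • u ≤ b • d ↔ ∀ i, a * v i ≤ b * w i := by
    intro a b
    have h1 : ((b • (⟨d, hdS⟩ : S) : S) : D) = b • d := by simp
    have h2 : ((a • (⟨u, huS⟩ : S) : S) : D) = a • u := by simp
    rw [← h1, ← h2, hSle]
    constructor <;> intro hi i <;> have := hi i <;> rw [hsm, hsm] at * <;> exact this
  -- coordinates of u are positive
  have hvpos : ∀ i, 0 < v i := by
    intro i
    have h0 : (0 : ℤ) ≤ v i := by
      have : ((0 : S) : D) ≤ ((⟨u, huS⟩ : S) : D) := h.unit_nonneg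
      have := (hSle 0 ⟨u, huS⟩).1 this i
      simpa using this
    obtain ⟨n, hn, hxu⟩ := h.unit_arch ((e.symm (Pi.single i 1) : S) : D)
    have hnu : ((((n : ℤ) • (⟨u, huS⟩ : S)) : S) : D) = (n : ℤ) • u := by simp
    have hle : ((e.symm (Pi.single i 1) : S) : D) ≤ (((n : ℤ) • (⟨u, huS⟩ : S) : S) : D) := by
      rw [hnu]; exact hxu
    have := (hSle _ _).1 hle i
    rw [hsm] at this
    simp only [AddEquiv.apply_symm_apply] at this
    have h1 : (1 : ℤ) ≤ (n : ℤ) * v i := by simpa using this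
    nlinarith [h1, h0]
  -- rational ratios
  have hvQ : ∀ i, (0 : ℚ) < (v i : ℚ) := fun i => by exact_mod_cast hvpos i
  set g : Fin k → ℚ := fun i => (w i : ℚ) / (v i : ℚ) with hg
  have hne : (Finset.univ : Finset (Fin k)).Nonempty := Finset.univ_nonempty
  set r : ℚ := Finset.univ.sup' hne g with hr
  set l : ℚ := Finset.univ.inf' hne g with hl
  -- ratio comparisons
  have hratio : ∀ (a b : ℤ) (i : Fin k), 0 < b → (g i ≤ (a : ℚ) / (b : ℚ) ↔ b * w i ≤ a * v i) := by
    intro a b i hb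
    have hbQ : (0 : ℚ) < (b : ℚ) := by exact_mod_cast hb
    rw [hg]
    rw [div_le_div_iff₀ (hvQ i) hbQ]
    constructor
    · intro hle
      have : (b : ℚ) * (w i : ℚ) ≤ (a : ℚ) * (v i : ℚ) := by linarith
      exact_mod_cast this
    · intro hle
      have : (b : ℚ) * (w i : ℚ) ≤ (a : ℚ) * (v i : ℚ) := by exact_mod_cast hle
      linarith
  have hratio' : ∀ (a b : ℤ) (i : Fin k), 0 < b → ((a : ℚ) / (b : ℚ) ≤ g i ↔ a * v i ≤ b * w i) := by
    intro a b i hb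
    have hbQ : (0 : ℚ) < (b : ℚ) := by exact_mod_cast hb
    rw [hg]
    rw [div_le_div_iff₀ hbQ (hvQ i)]
    constructor
    · intro hle
      have : (a : ℚ) * (v i : ℚ) ≤ (b : ℚ) * (w i : ℚ) := by linarith
      exact_mod_cast this
    · intro hle
      have : (a : ℚ) * (v i : ℚ) ≤ (b : ℚ) * (w i : ℚ) := by exact_mod_cast hle
      linarith
  -- key step at the level of D, for Φ or Φ.symm
  have keyD : ∀ (Ψ : D ≃+ D), (∀ x y : D, x ≤ y ↔ Ψ x ≤ Ψ y) → Ψ d = -d →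
      ∀ P M : ℤ, 0 < M → M • Ψ u = P • u →
      (∀ a b : ℤ, b • d ≤ a • u → (-(P * a)) • u ≤ (M * b) • d) ∧
      (∀ a b : ℤ, a • u ≤ b • d → (M * b) • d ≤ (-(P * a)) • u) := by
    intro Ψ hΨord hΨd P M hM hΨu
    constructor
    · intro a b hba
      have h1 : Ψ (b • d) ≤ Ψ (a • u) := (hΨord _ _).1 hba
      rw [map_zsmul, map_zsmul, hΨd] at h1
      have h2 : M • (b • (-d)) ≤ M • (a • Ψ u) := zsmul_le_zsmul_right (le_of_lt hM) h1
      have h3 : (M * b) • (-d) ≤ (P * a) • u := by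
        calc (M * b) • (-d) = M • (b • (-d)) := by rw [mul_smul]
          _ ≤ M • (a • Ψ u) := h2
          _ = a • (M • Ψ u) := by rw [smul_comm]
          _ = a • (P • u) := by rw [hΨu]
          _ = (P * a) • u := by rw [← mul_smul, mul_comm]
      have h4 : -((M * b) • d) ≤ (P * a) • u := by rwa [smul_neg] at h3
      have := neg_le_neg h4
      rw [neg_neg] at this
      calc (-(P * a)) • u = -((P * a) • u) := by rw [neg_smul]
        _ ≤ (M * b) • d := this
    · intro a b hab
      have h1 : Ψ (a • u) ≤ Ψ (b • d) := (hΨord _ _).1 hab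
      rw [map_zsmul, map_zsmul, hΨd] at h1
      have h2 : M • (a • Ψ u) ≤ M • (b • (-d)) := zsmul_le_zsmul_right (le_of_lt hM) h1
      have h3 : (P * a) • u ≤ (M * b) • (-d) := by
        calc (P * a) • u = a • (P • u) := by rw [← mul_smul, mul_comm]
          _ = a • (M • Ψ u) := by rw [hΨu]
          _ = M • (a • Ψ u) := by rw [smul_comm]
          _ ≤ M • (b • (-d)) := h2
          _ = (M * b) • (-d) := by rw [mul_smul]
      rw [smul_neg, le_neg] at h3
      rw [neg_smul]
      exact h3
  -- key step at the level of ℚ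
  have keyQ : ∀ P M : ℤ, 0 < P → 0 < M →
      (∀ a b : ℤ, b • d ≤ a • u → (-(P * a)) • u ≤ (M * b) • d) →
      -((P : ℚ) / (M : ℚ)) * r ≤ l := by
    intro P M hP hM hkey
    set a : ℤ := r.num with ha
    set b : ℤ := (r.den : ℤ) with hb
    have hb0 : 0 < b := by rw [hb]; exact_mod_cast r.pos
    have hab : (a : ℚ) / (b : ℚ) = r := by
      rw [ha, hb]; exact_mod_cast Rat.num_div_den r
    have hbd : b • d ≤ a • u := by
      rw [hcoord]
      intro i
      rw [← hratio a b i hb0, hab]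
      exact Finset.le_sup' g (Finset.mem_univ i)
    have h1 := hkey a b hbd
    have h2 : ∀ i, (-(P * a)) * v i ≤ (M * b) * w i := (hcoord' _ _).1 h1
    have hMb : (0 : ℤ) < M * b := mul_pos hM hb0
    apply Finset.le_inf'
    intro i _
    have h3 : ((-(P * a) : ℤ) : ℚ) / ((M * b : ℤ) : ℚ) ≤ g i :=
      (hratio' _ _ i hMb).2 (h2 i)
    have h4 : ((-(P * a) : ℤ) : ℚ) / ((M * b : ℤ) : ℚ) = -((P : ℚ) / (M : ℚ)) * r := by
      push_cast
      rw [← hab]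
      have hbQ : ((b : ℤ) : ℚ) ≠ 0 := by exact_mod_cast hb0.ne'
      have hMQ : ((M : ℤ) : ℚ) ≠ 0 := by exact_mod_cast hM.ne'
      field_simp
    rwa [h4] at h3
  have keyQ' : ∀ P M : ℤ, 0 < P → 0 < M →
      (∀ a b : ℤ, a • u ≤ b • d → (M * b) • d ≤ (-(P * a)) • u) →
      r ≤ -((P : ℚ) / (M : ℚ)) * l := by
    intro P M hP hM hkey
    set a : ℤ := l.num with ha
    set b : ℤ := (l.den : ℤ) with hb
    have hb0 : 0 < b := by rw [hb]; exact_mod_cast l.pos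
    have hab : (a : ℚ) / (b : ℚ) = l := by
      rw [ha, hb]; exact_mod_cast Rat.num_div_den l
    have hbd : a • u ≤ b • d := by
      rw [hcoord']
      intro i
      rw [← hratio' a b i hb0, hab]
      exact Finset.inf'_le g (Finset.mem_univ i)
    have h1 := hkey a b hbd
    have h2 : ∀ i, (M * b) * w i ≤ (-(P * a)) * v i := (hcoord _ _).1 h1
    have hMb : (0 : ℤ) < M * b := mul_pos hM hb0
    apply Finset.sup'_le
    intro i _
    have h3 : g i ≤ ((-(P * a) : ℤ) : ℚ) / ((M * b : ℤ) : ℚ) :=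
      (hratio _ _ i hMb).2 (h2 i)
    have h4 : ((-(P * a) : ℤ) : ℚ) / ((M * b : ℤ) : ℚ) = -((P : ℚ) / (M : ℚ)) * l := by
      push_cast
      rw [← hab]
      have hbQ : ((b : ℤ) : ℚ) ≠ 0 := by exact_mod_cast hb0.ne'
      have hMQ : ((M : ℤ) : ℚ) ≠ 0 := by exact_mod_cast hM.ne'
      field_simp
    rwa [h4] at h3
  -- apply to Φ and Φ.symm
  have hp : (0 : ℤ) < q.num := Rat.num_pos.2 hq
  have hm : (0 : ℤ) < (q.den : ℤ) := by exact_mod_cast q.pos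
  have hordsymm : ∀ x y : D, x ≤ y ↔ Φ.symm x ≤ Φ.symm y := by
    intro x y
    constructor
    · intro hxy
      have := (hord (Φ.symm x) (Φ.symm y)).2
      simp only [AddEquiv.apply_symm_apply] at this
      exact this hxy
    · intro hxy
      have := (hord (Φ.symm x) (Φ.symm y)).1 hxy
      simpa using this
  have hnegsymm : Φ.symm d = -d := by
    have h0 : Φ.symm (-d) = d := by rw [← hneg, AddEquiv.symm_apply_apply]
    rw [map_neg] at h0
    exact neg_eq_iff_eq_neg.1 h0
  have hΦusymm : q.num • Φ.symm u = (q.den : ℤ) • u := by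
    have := congrArg Φ.symm hΦu
    rw [map_zsmul, map_zsmul, AddEquiv.symm_apply_apply] at this
    exact this.symm
  obtain ⟨k1, k2⟩ := keyD Φ hord hneg q.num (q.den : ℤ) hm hΦu
  obtain ⟨k1', k2'⟩ := keyD Φ.symm hordsymm hnegsymm (q.den : ℤ) q.num hp hΦusymm
  set Q : ℚ := (q.num : ℚ) / (q.den : ℚ) with hQ
  have hQq : Q = q := by rw [hQ]; exact_mod_cast Rat.num_div_den q
  have hA1 : -Q * r ≤ l := keyQ q.num (q.den : ℤ) hp hm k1
  have hA2 : r ≤ -Q * l := keyQ' q.num (q.den : ℤ) hp hm k2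
  have hB1 : -(((q.den : ℤ) : ℚ) / ((q.num : ℤ) : ℚ)) * r ≤ l := keyQ (q.den : ℤ) q.num hm hp k1'
  have hB2 : r ≤ -(((q.den : ℤ) : ℚ) / ((q.num : ℤ) : ℚ)) * l := keyQ' (q.den : ℤ) q.num hm hp k2'
  have hQpos : 0 < Q := by rw [hQq]; exact hq
  have hQinv : ((q.den : ℤ) : ℚ) / ((q.num : ℤ) : ℚ) = Q⁻¹ := by
    rw [hQ, inv_div]
    norm_cast
  rw [hQinv] at hB1 hB2
  -- derive r = -Q * l and l = -Q * r
  have hQne : Q ≠ 0 := hQpos.ne'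
  have hrl1 : r = -Q * l := by
    have h1 : -Q * l ≤ r := by
      have h5 := mul_le_mul_of_nonneg_left hB1 (le_of_lt hQpos)
      have h2 : Q * (-Q⁻¹ * r) = -r := by field_simp
      rw [h2] at h5
      linarith
    exact le_antisymm hA2 h1
  have hrl2 : l = -Q * r := by
    have h1 : l ≤ -Q * r := by
      have h5 := mul_le_mul_of_nonneg_left hB2 (le_of_lt hQpos)
      have h2 : Q * (-Q⁻¹ * l) = -l := by field_simp
      rw [h2] at h5
      linarith
    exact le_antisymm h1 hA1
  -- conclude r = l = 0
  have hq1' : Q ≠ 1 := by rw [hQq]; exact hq1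
  have hQQ : Q * Q ≠ 1 := by
    intro hc
    apply hq1'
    have h0 : (Q - 1) * (Q + 1) = 0 := by linear_combination hc
    rcases mul_eq_zero.1 h0 with hcase | hcase
    · linarith
    · linarith
  have hr0 : r = 0 := by
    have heq : r = Q * Q * r := by
      conv_lhs => rw [hrl1, hrl2]
      ring
    have h0 : r * (Q * Q - 1) = 0 := by linear_combination -heq
    rcases mul_eq_zero.1 h0 with hcase | hcase
    · exact hcase
    · exact absurd (by linarith : Q * Q = 1) hQQ
  have hl0 : l = 0 := by rw [hrl2, hr0]; ring
  -- hence d = 0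
  apply hd
  have hw0 : ∀ i, w i = 0 := by
    intro i
    have h1 : g i ≤ r := Finset.le_sup' g (Finset.mem_univ i)
    have h2 : l ≤ g i := Finset.inf'_le g (Finset.mem_univ i)
    have hg0 : g i = 0 := le_antisymm (hr0 ▸ h1) (hl0 ▸ h2)
    have : (w i : ℚ) = 0 := by
      rw [hg] at hg0
      simp only [div_eq_zero_iff] at hg0
      rcases hg0 with hcase | hcase
      · exact_mod_cast hcase
      · exact absurd (by exact_mod_cast hcase) (hvpos i).ne'
    exact_mod_cast this
  have : (⟨d, hdS⟩ : S) = 0 := by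
    apply e.injective
    rw [map_zero]
    funext i
    exact hw0 i
  simpa using congrArg Subtype.val this
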